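/- If |p| ≥ 2 and |q| ≥ 2, then in BS(p,q) the elements x = a and y = b a b^{-1} generate a non-abelian free subgroup of rank 2; in particular BS(p,q) is non-amenable. -/

import Mathlib

/-- The single defining relation of the Baumslag–Solitar group `BS(p,q)`:
`a b^p a⁻¹ (b^q)⁻¹`. -/
def BSRel (p q : ℤ) : Set (FreeGroup Bool) :=
  {FreeGroup.of true * (FreeGroup.of false) ^ p * (FreeGroup.of true)⁻¹ *
    ((FreeGroup.of false) ^ q)⁻¹}

/-- The Baumslag–Solitar group `BS(p,q) = ⟨a, b ∣ a b^p a⁻¹ = b^q⟩`. -/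
abbrev BS (p q : ℤ) : Type := PresentedGroup (BSRel p q)

/-- The generator `a` of `BS(p,q)`. -/
def BSa (p q : ℤ) : BS p q := PresentedGroup.of true

/-- The generator `b` of `BS(p,q)`. -/
def BSb (p q : ℤ) : BS p q := PresentedGroup.of false

namespace BSAux

open HNNExtension Multiplicative

abbrev G := Multiplicative ℤ

lemma ofAdd_zpow' (p k : ℤ) : (ofAdd p : G) ^ k = ofAdd (k * p) := by
  rw [← ofAdd_zsmul, zsmul_eq_mul, Int.cast_id]

def Ap (p : ℤ) : Subgroup G := Subgroup.zpowers (ofAdd p)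

lemma mem_Ap {p : ℤ} {x : G} : x ∈ Ap p ↔ ∃ k : ℤ, k * p = x.toAdd := by
  constructor
  · rintro ⟨k, rfl⟩
    exact ⟨k, by show k * p = toAdd ((ofAdd p : G) ^ k); rw [ofAdd_zpow', toAdd_ofAdd]⟩
  · rintro ⟨k, hk⟩
    refine ⟨k, ?_⟩
    show (ofAdd p : G) ^ k = x
    rw [ofAdd_zpow', hk, ofAdd_toAdd]

lemma not_mem_Ap {p : ℤ} (hp : 2 ≤ |p|) {n : ℤ} (hn : n = 1 ∨ n = -1) :
    (ofAdd n : G) ∉ Ap p := by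
  rw [mem_Ap]
  rintro ⟨k, hk⟩
  simp only [toAdd_ofAdd] at hk
  have hu : IsUnit p := by
    rcases hn with rfl | rfl
    · exact IsUnit.of_mul_eq_one (a := p) k (by linarith [mul_comm k p])
    · exact IsUnit.of_mul_eq_one (a := p) (-k) (by rw [mul_comm, neg_mul, hk]; norm_num)
  rcases Int.isUnit_iff.mp hu with rfl | rfl <;> simp at hp

variable {p q : ℤ}

lemma Ap_toAdd_eq {x : G} (hx : x ∈ Ap p) (hp : p ≠ 0) :
    x.toAdd / p * p = x.toAdd := by
  obtain ⟨k, hk⟩ := mem_Ap.mp hx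
  rw [← hk, Int.mul_ediv_cancel k hp]

/-- The isomorphism `pℤ ≃ qℤ` sending `k p` to `k q`. -/
def bsEquiv (p q : ℤ) (hp : p ≠ 0) (hq : q ≠ 0) : Ap p ≃* Ap q where
  toFun x := ⟨ofAdd (x.1.toAdd / p * q), mem_Ap.mpr ⟨x.1.toAdd / p, by simp [mul_comm]⟩⟩
  invFun y := ⟨ofAdd (y.1.toAdd / q * p), mem_Ap.mpr ⟨y.1.toAdd / q, by simp [mul_comm]⟩⟩
  left_inv x := by
    apply Subtype.ext
    show ofAdd (toAdd (ofAdd (toAdd x.1 / p * q)) / q * p) = x.1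
    rw [toAdd_ofAdd, Int.mul_ediv_cancel _ hq, Ap_toAdd_eq x.2 hp, ofAdd_toAdd]
  right_inv y := by
    apply Subtype.ext
    show ofAdd (toAdd (ofAdd (toAdd y.1 / q * p)) / p * q) = y.1
    rw [toAdd_ofAdd, Int.mul_ediv_cancel _ hp, Ap_toAdd_eq y.2 hq, ofAdd_toAdd]
  map_mul' x y := by
    apply Subtype.ext
    obtain ⟨k, hk⟩ := mem_Ap.mp x.2
    obtain ⟨l, hl⟩ := mem_Ap.mp y.2
    show ofAdd (toAdd (x.1 * y.1) / p * q) =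
      ofAdd (toAdd x.1 / p * q) * ofAdd (toAdd y.1 / p * q)
    rw [← ofAdd_add, ← hk, ← hl]
    have : toAdd (x.1 * y.1) = k * p + l * p := by
      rw [toAdd_mul, ← hk, ← hl]
    rw [this, Int.mul_ediv_cancel k hp, Int.mul_ediv_cancel l hp]
    have : (k * p + l * p) / p = k + l := by
      rw [← add_mul, Int.mul_ediv_cancel _ hp]
    rw [this, add_mul]

lemma bsEquiv_apply (hp : p ≠ 0) (hq : q ≠ 0) (k : ℤ) (h : (ofAdd (k * p) : G) ∈ Ap p) :
    (bsEquiv p q hp hq ⟨ofAdd (k * p), h⟩ : G) = ofAdd (k * q) := by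
  show ofAdd (toAdd (ofAdd (k * p) : G) / p * q) = _
  rw [toAdd_ofAdd, Int.mul_ediv_cancel k hp]


section Words

/-- sign of a letter -/
def sgn (s : Bool) : ℤˣ := if s then 1 else -1

/-- trailing base factor of a letter -/
def tl (c : Bool) : G := if c then 1 else (ofAdd (1 : ℤ))⁻¹

/-- leading base factor of the first letter of a word -/
def hdg : List (Bool × Bool) → G
  | (false, _) :: _ => ofAdd (1 : ℤ)
  | _ => 1

/-- the list part of the HNN reduced word associated to a free word -/
def lst : List (Bool × Bool) → List (ℤˣ × G)
  | [] => []
  | (c, s) :: L => (sgn s, tl c * hdg L) :: lst L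

lemma lst_length : ∀ L : List (Bool × Bool), (lst L).length = L.length
  | [] => rfl
  | (c, s) :: L => by rw [lst, List.length_cons, List.length_cons, lst_length L]

variable (p q : ℤ) (hp0 : p ≠ 0) (hq0 : q ≠ 0)

abbrev H := HNNExtension G (Ap p) (Ap q) (bsEquiv p q hp0 hq0)

open HNNExtension in
/-- images of the generators: `x ↦ t`, `y ↦ b t b⁻¹` -/
def gg (c : Bool) : H p q hp0 hq0 :=
  if c then t else of (ofAdd (1 : ℤ)) * t * (of (ofAdd (1 : ℤ)))⁻¹

/-- image of a single signed letter -/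
def hh (x : Bool × Bool) : H p q hp0 hq0 :=
  cond x.2 (gg p q hp0 hq0 x.1) (gg p q hp0 hq0 x.1)⁻¹

open HNNExtension in
lemma prod_lst (L : List (Bool × Bool)) :
    (of (hdg L) : H p q hp0 hq0) *
      ((lst L).map fun x => t ^ (x.1 : ℤ) * of x.2).prod
      = (L.map (hh p q hp0 hq0)).prod := by
  induction L with
  | nil => simp [hdg, lst]
  | cons a L ih =>
    obtain ⟨c, s⟩ := a
    rw [show lst ((c, s) :: L) = (sgn s, tl c * hdg L) :: lst L from rfl]
    rw [List.map_cons, List.map_cons, List.prod_cons, List.prod_cons, ← ih]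
    cases c <;> cases s <;>
      simp [hdg, tl, sgn, hh, gg, mul_assoc, mul_inv_rev]

open HNNExtension in
lemma chain_lst (hp : 2 ≤ |p|) (hq : 2 ≤ |q|) :
    ∀ L : List (Bool × Bool),
      L.Chain' (fun a b => ¬(a.1 = b.1 ∧ a.2 = !b.2)) →
      (lst L).Chain' (fun a b =>
        a.2 ∈ toSubgroup (Ap p) (Ap q) a.1 → a.1 = b.1) := by
  intro L hL
  induction L with
  | nil => exact List.isChain_nil
  | cons a L ih =>
    obtain ⟨c, s⟩ := a
    rw [List.Chain', List.isChain_cons] at hL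
    rw [show lst ((c, s) :: L) = (sgn s, tl c * hdg L) :: lst L from rfl,
      List.Chain', List.isChain_cons]
    refine ⟨?_, ih hL.2⟩
    intro y hy hmem
    -- `L` must be nonempty
    cases L with
    | nil => simp [lst] at hy
    | cons b L' =>
      obtain ⟨c', s'⟩ := b
      rw [show lst ((c', s') :: L') = (sgn s', tl c' * hdg L') :: lst L' from rfl] at hy
      simp only [List.head?_cons, Option.mem_some_iff] at hy
      subst hy
      show sgn s = sgn s'
      -- rule out the mixed cases
      have hdisj : (tl c * hdg ((c', s') :: L') = 1 ∧ c = c') ∨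
          (tl c * hdg ((c', s') :: L') = ofAdd (1 : ℤ) ∨
            tl c * hdg ((c', s') :: L') = ofAdd (-1 : ℤ)) := by
        cases c <;> cases c' <;> simp [tl, hdg]
      rcases hdisj with ⟨h1, rfl⟩ | h1
      · -- same letters: reducedness forces equal signs
        have hred := hL.1 (c, s') (by simp)
        have hss : s = s' := by
          by_contra hne
          exact hred ⟨rfl, by revert hne; cases s <;> cases s' <;> simp⟩
        rw [hss]
      · -- mixed letters: the base element is `b^{±1}`, not in either subgroup
        exfalso
        have hnot : tl c * hdg ((c', s') :: L') ∉ toSubgroup (Ap p) (Ap q) (sgn s) := by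
          rcases Int.units_eq_one_or (sgn s) with hu | hu <;> rw [hu]
          · rcases h1 with h1 | h1 <;> rw [h1]
            · exact not_mem_Ap hp (Or.inl rfl)
            · exact not_mem_Ap hp (Or.inr rfl)
          · rcases h1 with h1 | h1 <;> rw [h1]
            · exact not_mem_Ap hq (Or.inl rfl)
            · exact not_mem_Ap hq (Or.inr rfl)
        exact hnot hmem

open HNNExtension in
lemma psi_inj (hp : 2 ≤ |p|) (hq : 2 ≤ |q|)
    (hred : ∀ L : List (Bool × Bool), FreeGroup.reduce L = L →
      L.Chain' (fun a b => ¬(a.1 = b.1 ∧ a.2 = !b.2))) :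
    Function.Injective
      (FreeGroup.lift (gg p q hp0 hq0) : FreeGroup Bool →* H p q hp0 hq0) := by
  rw [injective_iff_map_eq_one]
  intro w hw
  set L := w.toWord with hL
  have hchain := chain_lst p q hp hq L (hred L (FreeGroup.reduce_toWord w))
  set r : NormalWord.ReducedWord G (Ap p) (Ap q) := ⟨hdg L, lst L, hchain⟩ with hr
  have hprod : r.prod (bsEquiv p q hp0 hq0) = 1 := by
    show (of (hdg L) : H p q hp0 hq0) *
      ((lst L).map fun x => t ^ (x.1 : ℤ) * of x.2).prod = 1
    rw [prod_lst]
    have h1 : (L.map (hh p q hp0 hq0)).prod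
        = FreeGroup.lift (gg p q hp0 hq0) w := by
      conv_rhs => rw [← FreeGroup.mk_toWord (x := w)]
      rw [FreeGroup.lift_mk]
      rfl
    rw [h1, hw]
  have hmem : r.prod (bsEquiv p q hp0 hq0) ∈
      (of.range : Subgroup (H p q hp0 hq0)) := by
    rw [hprod]; exact one_mem _
  have hnil := ReducedWord.toList_eq_nil_of_mem_of_range _ r hmem
  have : L.length = 0 := by
    rw [← lst_length L]
    simpa using congrArg List.length hnil
  have hLnil : w.toWord = [] := by
    rw [← hL]; exact List.length_eq_zero_iff.mp this
  exact FreeGroup.toWord_eq_nil_iff.mp hLnil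

end Words

lemma chain'_of_reduce : ∀ L : List (Bool × Bool), FreeGroup.reduce L = L →
    L.Chain' (fun a b => ¬(a.1 = b.1 ∧ a.2 = !b.2)) := by
  intro L
  induction L with
  | nil => intro _; exact List.isChain_nil
  | cons a L ih =>
    intro h
    rw [FreeGroup.reduce.cons] at h
    cases hr : FreeGroup.reduce L with
    | nil =>
      rw [hr] at h
      simp only [List.cons.injEq] at h
      rw [← h.2]
      exact List.isChain_singleton a
    | cons hd tl =>
      rw [hr] at h
      dsimp only at h
      by_cases hc : a.1 = hd.1 ∧ a.2 = !hd.2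
      · rw [if_pos hc] at h
        exfalso
        have h1 : tl.length ≤ L.length - 1 := by
          have := (FreeGroup.reduce.red (L := L)).length_le
          rw [hr] at this
          simp only [List.length_cons] at this
          omega
        have h2 : tl.length = L.length + 1 := by
          rw [h]; simp
        omega
      · rw [if_neg hc] at h
        have h2 : L = hd :: tl := by
          simpa using h.symm
        have := ih (by rw [← h2] at hr; exact hr)
        rw [h2]
        exact List.isChain_cons_cons.mpr ⟨hc, h2 ▸ this⟩

section Hom

open HNNExtension

variable (p q : ℤ) (hp0 : p ≠ 0) (hq0 : q ≠ 0)

lemma key_conj : (t * of (ofAdd p) * t⁻¹ : H p q hp0 hq0) = of (ofAdd q) := by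
  have h1 : (ofAdd p : G) ∈ Ap p := Subgroup.mem_zpowers _
  have h2 := equiv_eq_conj (φ := bsEquiv p q hp0 hq0) ⟨ofAdd p, h1⟩
  rw [← h2]
  congr 1
  show ofAdd (toAdd (ofAdd p : G) / p * q) = ofAdd q
  rw [toAdd_ofAdd, Int.ediv_self hp0, one_mul]

lemma rel_holds : ∀ r ∈ BSRel p q,
    FreeGroup.lift (fun c => if c then t else of (ofAdd (1 : ℤ)) :
      Bool → H p q hp0 hq0) r = 1 := by
  intro r hr
  rw [BSRel, Set.mem_singleton_iff] at hr
  subst hr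
  have hb : ∀ n : ℤ, (FreeGroup.lift (fun c => if c then t else of (ofAdd (1 : ℤ)) :
      Bool → H p q hp0 hq0)) (FreeGroup.of false ^ n) = of (ofAdd n) := by
    intro n
    rw [map_zpow, FreeGroup.lift_apply_of, if_neg (by simp), ← map_zpow, ofAdd_zpow',
      mul_one]
  simp only [map_mul, map_inv, hb, FreeGroup.lift_apply_of, if_true]
  rw [key_conj p q hp0 hq0]
  simp

/-- The homomorphism `BS(p,q) → HNN`. -/
def bsToHNN : BS p q →* H p q hp0 hq0 :=
  PresentedGroup.toGroup (rel_holds p q hp0 hq0)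

lemma bsToHNN_a : bsToHNN p q hp0 hq0 (BSa p q) = t :=
  PresentedGroup.toGroup.of _

lemma bsToHNN_b : bsToHNN p q hp0 hq0 (BSb p q) = of (ofAdd (1 : ℤ)) :=
  PresentedGroup.toGroup.of _

lemma comp_eq :
    (bsToHNN p q hp0 hq0).comp
      (FreeGroup.lift (fun t : Bool =>
        if t then BSa p q else BSb p q * BSa p q * (BSb p q)⁻¹)) =
      FreeGroup.lift (gg p q hp0 hq0) := by
  apply FreeGroup.ext_hom
  intro c
  cases c <;>
    simp [FreeGroup.lift_apply_of, gg, bsToHNN_a, bsToHNN_b, map_mul, map_inv]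

end Hom

end BSAux

/-- If `|p| ≥ 2` and `|q| ≥ 2`, then `x = a` and `y = b a b⁻¹` generate a free subgroup of
rank 2 in `BS(p,q)`: the induced homomorphism from the free group on two generators is
injective (in particular its image is a non-abelian free subgroup of rank 2, so `BS(p,q)`
is non-amenable). -/
theorem bs_free_subgroup (p q : ℤ) (hp : 2 ≤ |p|) (hq : 2 ≤ |q|) :
    Function.Injective
      (FreeGroup.lift (fun t : Bool =>
        if t then BSa p q else BSb p q * BSa p q * (BSb p q)⁻¹) :
        FreeGroup Bool →* BS p q) := by
  have hp0 : p ≠ 0 := by rintro rfl; simp at hp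
  have hq0 : q ≠ 0 := by rintro rfl; simp at hq
  have hinj := BSAux.psi_inj p q hp0 hq0 hp hq BSAux.chain'_of_reduce
  have hcomp := BSAux.comp_eq p q hp0 hq0
  have : Function.Injective
      ((BSAux.bsToHNN p q hp0 hq0) ∘
        (FreeGroup.lift (fun t : Bool =>
          if t then BSa p q else BSb p q * BSa p q * (BSb p q)⁻¹))) := by
    rw [show ⇑(BSAux.bsToHNN p q hp0 hq0) ∘
        ⇑(FreeGroup.lift (fun t : Bool =>
          if t then BSa p q else BSb p q * BSa p q * (BSb p q)⁻¹)) =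
        ⇑((BSAux.bsToHNN p q hp0 hq0).comp
          (FreeGroup.lift (fun t : Bool =>
            if t then BSa p q else BSb p q * BSa p q * (BSb p q)⁻¹))) from rfl,
      hcomp]
    exact hinj
  exact Function.Injective.of_comp this
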